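/- Let G be a group and C ⊆ G a normal cone whose induced relation ≥ is a partial order. Suppose e, f, g are dominants such that γ(e,f)·γ(f,e) = 1 and γ(e,g)·γ(g,e) = 1. Then γ(f,g) = γ(e,g)/γ(e,f) and γ(g,f) = γ(e,f)/γ(e,g); in particular γ(f,g)·γ(g,f) = 1. -/
import Mathlib


open Filter

/-- A subset `C` of a group is a *normal cone* if it contains `1`, is closed under
multiplication, and is invariant under conjugation. -/
def IsNormalCone {G : Type*} [Group G] (C : Set G) : Prop :=
  (1 : G) ∈ C ∧ (∀ f g : G, f ∈ C → g ∈ C → f * g ∈ C) ∧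
    (∀ f h : G, f ∈ C → h * f * h⁻¹ ∈ C)

/-- The relation `f ≥ g` induced by the cone `C`: `f * g⁻¹ ∈ C`. -/
def ConeGe {G : Type*} [Group G] (C : Set G) (f g : G) : Prop := f * g⁻¹ ∈ C

/-- `f` is a *dominant*: it lies in the cone, is not `1`, and some power of `f`
dominates any given element. -/
def IsDominant {G : Type*} [Group G] (C : Set G) (f : G) : Prop :=
  f ∈ C ∧ f ≠ 1 ∧ ∀ g : G, ∃ p : ℕ, ConeGe C (f ^ p) g

/-- `γ_k(f,g) = inf { p ∈ ℤ | f^p ≥ g^k }`. -/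
noncomputable def gammaK {G : Type*} [Group G] (C : Set G) (f g : G) (k : ℕ) : ℤ :=
  sInf {p : ℤ | ConeGe C (f ^ p) (g ^ k)}

section Aux

variable {G : Type*} [Group G] {C : Set G}

lemma cone_pow (hC : IsNormalCone C) {f : G} (hfC : f ∈ C) (n : ℕ) : f ^ n ∈ C := by
  induction n with
  | zero => simpa using hC.1
  | succ n ih => rw [pow_succ]; exact hC.2.1 _ _ ih hfC

lemma coneGe_trans (hC : IsNormalCone C) {a b c : G} (h1 : ConeGe C a b) (h2 : ConeGe C b c) :
    ConeGe C a c := by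
  have key : a * c⁻¹ = (a * b⁻¹) * (b * c⁻¹) := by group
  rw [ConeGe, key]
  exact hC.2.1 _ _ h1 h2

lemma coneGe_prod (hC : IsNormalCone C) {f g : G} {p q : ℤ} {i j : ℕ}
    (h1 : ConeGe C (f ^ p) (g ^ i)) (h2 : ConeGe C (f ^ q) (g ^ j)) :
    ConeGe C (f ^ (p + q)) (g ^ (i + j)) := by
  have key : f ^ (p + q) * (g ^ (i + j))⁻¹
      = (f ^ p * (f ^ q * (g ^ j)⁻¹) * (f ^ p)⁻¹) * (f ^ p * (g ^ i)⁻¹) := by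
    rw [zpow_add, pow_add]; group
  rw [ConeGe, key]
  exact hC.2.1 _ _ (hC.2.2 _ _ h2) h1

lemma S_nonempty (hf : IsDominant C f) (g : G) (k : ℕ) :
    {p : ℤ | ConeGe C (f ^ p) (g ^ k)}.Nonempty := by
  obtain ⟨p, hp⟩ := hf.2.2 (g ^ k)
  exact ⟨(p : ℤ), by simpa [zpow_natCast] using hp⟩

lemma S_one_le (hC : IsNormalCone C) (hanti : ∀ f g : G, ConeGe C f g → ConeGe C g f → f = g)
    {f g : G} (hfC : f ∈ C) (hg : IsDominant C g) {k : ℕ} (hk : 1 ≤ k) {p : ℤ}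
    (hp : ConeGe C (f ^ p) (g ^ k)) : 1 ≤ p := by
  by_contra h
  push_neg at h
  have hp0 : p ≤ 0 := by omega
  have h1 : f ^ (-p) ∈ C := by
    have h2 : f ^ ((-p).toNat) ∈ C := cone_pow hC hfC _
    rwa [← zpow_natCast, Int.toNat_of_nonneg (by omega)] at h2
  have hgk : (g ^ k)⁻¹ ∈ C := by
    have h3 := hC.2.1 _ _ h1 hp
    have e : f ^ (-p) * (f ^ p * (g ^ k)⁻¹) = (g ^ k)⁻¹ := by group
    rwa [e] at h3
  have hgk1 : g ^ k = 1 := by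
    apply hanti
    · show g ^ k * (1:G)⁻¹ ∈ C
      simpa using cone_pow hC hg.1 k
    · show (1:G) * (g ^ k)⁻¹ ∈ C
      simpa using hgk
  have hginv : g⁻¹ ∈ C := by
    have h4 : g ^ (k - 1) ∈ C := cone_pow hC hg.1 _
    have e : g ^ (k - 1) * g = 1 := by
      rw [← pow_succ, Nat.sub_add_cancel hk, hgk1]
    rwa [eq_inv_of_mul_eq_one_left e] at h4
  exact hg.2.1 (hanti g 1 (by show g * (1:G)⁻¹ ∈ C; simpa using hg.1)
    (by show (1:G) * g⁻¹ ∈ C; simpa using hginv))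

lemma S_bddBelow (hC : IsNormalCone C) (hanti : ∀ f g : G, ConeGe C f g → ConeGe C g f → f = g)
    {f g : G} (hfC : f ∈ C) (hg : IsDominant C g) {k : ℕ} (hk : 1 ≤ k) :
    BddBelow {p : ℤ | ConeGe C (f ^ p) (g ^ k)} :=
  ⟨1, fun _ hp => S_one_le hC hanti hfC hg hk hp⟩

lemma gammaK_mem (hC : IsNormalCone C) (hanti : ∀ f g : G, ConeGe C f g → ConeGe C g f → f = g)
    {f g : G} (hf : IsDominant C f) (hg : IsDominant C g) {k : ℕ} (hk : 1 ≤ k) :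
    ConeGe C (f ^ (gammaK C f g k)) (g ^ k) :=
  Int.csInf_mem (S_nonempty hf g k) (S_bddBelow hC hanti hf.1 hg hk)

lemma gammaK_le (hC : IsNormalCone C) (hanti : ∀ f g : G, ConeGe C f g → ConeGe C g f → f = g)
    {f g : G} (hfC : f ∈ C) (hg : IsDominant C g) {k : ℕ} (hk : 1 ≤ k) {p : ℤ}
    (hp : ConeGe C (f ^ p) (g ^ k)) : gammaK C f g k ≤ p :=
  csInf_le (S_bddBelow hC hanti hfC hg hk) hp

lemma gammaK_one_le (hC : IsNormalCone C) (hanti : ∀ f g : G, ConeGe C f g → ConeGe C g f → f = g)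
    {f g : G} (hf : IsDominant C f) (hg : IsDominant C g) {k : ℕ} (hk : 1 ≤ k) :
    1 ≤ gammaK C f g k :=
  S_one_le hC hanti hf.1 hg hk (gammaK_mem hC hanti hf hg hk)

lemma gammaK_mul (hC : IsNormalCone C) (hanti : ∀ f g : G, ConeGe C f g → ConeGe C g f → f = g)
    {f g : G} (hf : IsDominant C f) (hg : IsDominant C g) {n : ℕ} (hn : 1 ≤ n) :
    gammaK C f g n ≤ n * gammaK C f g 1 := by
  have key : ∀ m : ℕ, ConeGe C (f ^ ((m : ℤ) * gammaK C f g 1)) (g ^ m) := by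
    intro m
    induction m with
    | zero => simpa [ConeGe] using hC.1
    | succ m ih =>
      have h1 : ConeGe C (f ^ gammaK C f g 1) (g ^ (1 : ℕ)) := by
        simpa using gammaK_mem hC hanti hf hg (le_refl 1)
      have := coneGe_prod hC ih h1
      have e : ((m : ℤ)) * gammaK C f g 1 + gammaK C f g 1 = ((m + 1 : ℕ) : ℤ) * gammaK C f g 1 := by
        push_cast; ring
      rwa [e] at this
  exact gammaK_le hC hanti hf.1 hg hn (key n)

lemma gammaK_comp (hC : IsNormalCone C) (hanti : ∀ f g : G, ConeGe C f g → ConeGe C g f → f = g)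
    {a b c : G} (ha : IsDominant C a) (hb : IsDominant C b) (hc : IsDominant C c)
    {k : ℕ} (hk : 1 ≤ k) :
    gammaK C a c k ≤ gammaK C a b (gammaK C b c k).toNat := by
  set m := gammaK C b c k with hm
  have hm1 : 1 ≤ m := gammaK_one_le hC hanti hb hc hk
  have hmtn : 1 ≤ m.toNat := by omega
  have h1 : ConeGe C (a ^ gammaK C a b m.toNat) (b ^ m.toNat) :=
    gammaK_mem hC hanti ha hb hmtn
  have h2 : ConeGe C (b ^ m.toNat) (c ^ k) := by
    have h3 : ConeGe C (b ^ m) (c ^ k) := gammaK_mem hC hanti hb hc hk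
    rwa [show b ^ m.toNat = b ^ m from by
      rw [← zpow_natCast, Int.toNat_of_nonneg (by omega)]]
  exact gammaK_le hC hanti ha.1 hc hk (coneGe_trans hC h1 h2)

end Aux

section Anal

variable {G : Type*} [Group G] {C : Set G}

lemma gamma_nonneg (hC : IsNormalCone C) (hanti : ∀ f g : G, ConeGe C f g → ConeGe C g f → f = g)
    {f g : G} (hf : IsDominant C f) (hg : IsDominant C g) {L : ℝ}
    (h : Tendsto (fun k : ℕ => (gammaK C f g k : ℝ) / (k : ℝ)) atTop (nhds L)) : 0 ≤ L := by
  apply ge_of_tendsto h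
  filter_upwards [eventually_ge_atTop 1] with k hk
  have h1 : (0:ℤ) ≤ gammaK C f g k := by
    have := gammaK_one_le hC hanti hf hg hk; omega
  have h2 : (0:ℝ) ≤ (gammaK C f g k : ℝ) := by exact_mod_cast h1
  positivity

/-- The triangle inequality `L(a,c) ≤ L(a,b) * L(b,c)`. -/
lemma gamma_triangle (hC : IsNormalCone C)
    (hanti : ∀ f g : G, ConeGe C f g → ConeGe C g f → f = g)
    {a b c : G} (ha : IsDominant C a) (hb : IsDominant C b) (hc : IsDominant C c)
    {Lab Lbc Lac : ℝ}
    (hab : Tendsto (fun k : ℕ => (gammaK C a b k : ℝ) / (k : ℝ)) atTop (nhds Lab))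
    (hbc : Tendsto (fun k : ℕ => (gammaK C b c k : ℝ) / (k : ℝ)) atTop (nhds Lbc))
    (hac : Tendsto (fun k : ℕ => (gammaK C a c k : ℝ) / (k : ℝ)) atTop (nhds Lac))
    (hbcpos : 0 < Lbc) : Lac ≤ Lab * Lbc := by
  set m : ℕ → ℕ := fun k => (gammaK C b c k).toNat with hmdef
  have hm1 : ∀ k : ℕ, 1 ≤ k → 1 ≤ gammaK C b c k :=
    fun k hk => gammaK_one_le hC hanti hb hc hk
  have hcast : ∀ k : ℕ, 1 ≤ k → ((m k : ℝ)) = (gammaK C b c k : ℝ) := by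
    intro k hk
    have h0 : (0:ℤ) ≤ gammaK C b c k := by have := hm1 k hk; omega
    simp only [hmdef]
    exact_mod_cast congrArg (Int.cast : ℤ → ℝ) (Int.toNat_of_nonneg h0)
  have hbc' : Tendsto (fun k : ℕ => (m k : ℝ) / (k : ℝ)) atTop (nhds Lbc) := by
    apply hbc.congr'
    filter_upwards [eventually_ge_atTop 1] with k hk
    rw [hcast k hk]
  have hmtopR : Tendsto (fun k : ℕ => (m k : ℝ)) atTop atTop := by
    have h1 : Tendsto (fun k : ℕ => ((m k : ℝ) / (k : ℝ)) * (k : ℝ)) atTop atTop :=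
      Tendsto.pos_mul_atTop hbcpos hbc' tendsto_natCast_atTop_atTop
    apply h1.congr'
    filter_upwards [eventually_ge_atTop 1] with k hk
    have hk0 : ((k:ℝ)) ≠ 0 := Nat.cast_ne_zero.mpr (by omega)
    exact div_mul_cancel₀ _ hk0
  have hmtop : Tendsto m atTop atTop := by
    rwa [tendsto_natCast_atTop_iff (R := ℝ)] at hmtopR
  have hab' : Tendsto (fun k : ℕ => (gammaK C a b (m k) : ℝ) / (m k : ℝ)) atTop (nhds Lab) :=
    hab.comp hmtop
  have key : ∀ᶠ k : ℕ in atTop, (gammaK C a c k : ℝ) / (k : ℝ)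
      ≤ ((gammaK C a b (m k) : ℝ) / (m k : ℝ)) * ((m k : ℝ) / (k : ℝ)) := by
    filter_upwards [eventually_ge_atTop 1] with k hk
    have hmk : 1 ≤ m k := by
      have := hm1 k hk; simp only [hmdef]; omega
    have hineq : gammaK C a c k ≤ gammaK C a b (m k) :=
      gammaK_comp hC hanti ha hb hc hk
    have hk0 : (0:ℝ) < (k : ℝ) := by exact_mod_cast hk
    have hmk0 : (0:ℝ) < (m k : ℝ) := by exact_mod_cast hmk
    have e : ((gammaK C a b (m k) : ℝ) / (m k : ℝ)) * ((m k : ℝ) / (k : ℝ))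
        = (gammaK C a b (m k) : ℝ) / (k : ℝ) := by
      field_simp
    rw [e]
    gcongr
  exact le_of_tendsto_of_tendsto hac (hab'.mul hbc') key

/-- `Leg ≤ γ₁(e,f) · Lfg`, giving positivity of `Lfg`. -/
lemma gamma_pos (hC : IsNormalCone C)
    (hanti : ∀ f g : G, ConeGe C f g → ConeGe C g f → f = g)
    {e f g : G} (he : IsDominant C e) (hf : IsDominant C f) (hg : IsDominant C g)
    {Leg Lfg : ℝ}
    (heg : Tendsto (fun k : ℕ => (gammaK C e g k : ℝ) / (k : ℝ)) atTop (nhds Leg))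
    (hfg : Tendsto (fun k : ℕ => (gammaK C f g k : ℝ) / (k : ℝ)) atTop (nhds Lfg))
    (hegpos : 0 < Leg) : 0 < Lfg := by
  set c1 : ℤ := gammaK C e f 1 with hc1
  have hc1pos : 1 ≤ c1 := gammaK_one_le hC hanti he hf (le_refl 1)
  have key : ∀ᶠ k : ℕ in atTop, (gammaK C e g k : ℝ) / (k : ℝ)
      ≤ ((gammaK C f g k : ℝ) / (k : ℝ)) * (c1 : ℝ) := by
    filter_upwards [eventually_ge_atTop 1] with k hk
    have hm1 : 1 ≤ gammaK C f g k := gammaK_one_le hC hanti hf hg hk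
    have h1 : gammaK C e g k ≤ gammaK C e f (gammaK C f g k).toNat :=
      gammaK_comp hC hanti he hf hg hk
    have h2 : gammaK C e f (gammaK C f g k).toNat
        ≤ ((gammaK C f g k).toNat : ℤ) * c1 :=
      gammaK_mul hC hanti he hf (by omega)
    have h3 : gammaK C e g k ≤ gammaK C f g k * c1 := by
      rw [Int.toNat_of_nonneg (by omega)] at h2
      omega
    have hk0 : (0:ℝ) < (k : ℝ) := by exact_mod_cast hk
    rw [div_mul_eq_mul_div]
    gcongr
    exact_mod_cast h3
  have hlim : Leg ≤ Lfg * (c1 : ℝ) :=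
    le_of_tendsto_of_tendsto heg (hfg.mul_const _) key
  have hc1R : (1:ℝ) ≤ (c1 : ℝ) := by exact_mod_cast hc1pos
  nlinarith

end Anal

/-- If `e, f, g` are dominants with `γ(e,f)γ(f,e) = 1` and `γ(e,g)γ(g,e) = 1`,
then `γ(f,g) = γ(e,g)/γ(e,f)`, `γ(g,f) = γ(e,f)/γ(e,g)`, and
`γ(f,g)γ(g,f) = 1`. -/
theorem statement11 {G : Type*} [Group G] (C : Set G) (hC : IsNormalCone C)
    (hanti : ∀ f g : G, ConeGe C f g → ConeGe C g f → f = g)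
    (e f g : G) (he : IsDominant C e) (hf : IsDominant C f) (hg : IsDominant C g)
    (Lef Lfe Leg Lge Lfg Lgf : ℝ)
    (hef : Tendsto (fun k : ℕ => (gammaK C e f k : ℝ) / (k : ℝ)) atTop (nhds Lef))
    (hfe : Tendsto (fun k : ℕ => (gammaK C f e k : ℝ) / (k : ℝ)) atTop (nhds Lfe))
    (heg : Tendsto (fun k : ℕ => (gammaK C e g k : ℝ) / (k : ℝ)) atTop (nhds Leg))
    (hge : Tendsto (fun k : ℕ => (gammaK C g e k : ℝ) / (k : ℝ)) atTop (nhds Lge))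
    (hfg : Tendsto (fun k : ℕ => (gammaK C f g k : ℝ) / (k : ℝ)) atTop (nhds Lfg))
    (hgf : Tendsto (fun k : ℕ => (gammaK C g f k : ℝ) / (k : ℝ)) atTop (nhds Lgf))
    (h1 : Lef * Lfe = 1) (h2 : Leg * Lge = 1) :
    Lfg = Leg / Lef ∧ Lgf = Lef / Leg ∧ Lfg * Lgf = 1 := by
  have h0ef : 0 ≤ Lef := gamma_nonneg hC hanti he hf hef
  have h0fe : 0 ≤ Lfe := gamma_nonneg hC hanti hf he hfe
  have h0eg : 0 ≤ Leg := gamma_nonneg hC hanti he hg heg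
  have h0ge : 0 ≤ Lge := gamma_nonneg hC hanti hg he hge
  have hefpos : 0 < Lef := by
    rcases h0ef.lt_or_eq with h | h
    · exact h
    · exfalso; rw [← h] at h1; simp at h1
  have hegpos : 0 < Leg := by
    rcases h0eg.lt_or_eq with h | h
    · exact h
    · exfalso; rw [← h] at h2; simp at h2
  have hfgpos : 0 < Lfg := gamma_pos hC hanti he hf hg heg hfg hegpos
  have hgfpos : 0 < Lgf := gamma_pos hC hanti he hg hf hef hgf hefpos
  have T1 : Lfg ≤ Lfe * Leg := gamma_triangle hC hanti hf he hg hfe heg hfg hegpos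
  have T2 : Leg ≤ Lef * Lfg := gamma_triangle hC hanti he hf hg hef hfg heg hfgpos
  have T3 : Lgf ≤ Lge * Lef := gamma_triangle hC hanti hg he hf hge hef hgf hefpos
  have T4 : Lef ≤ Leg * Lgf := gamma_triangle hC hanti he hg hf heg hgf hef hgfpos
  have e1 : Lfg = Leg / Lef := by
    rw [eq_div_iff (ne_of_gt hefpos)]
    apply le_antisymm
    · nlinarith [mul_le_mul_of_nonneg_right T1 h0ef]
    · nlinarith [T2]
  have e2 : Lgf = Lef / Leg := by
    rw [eq_div_iff (ne_of_gt hegpos)]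
    apply le_antisymm
    · nlinarith [mul_le_mul_of_nonneg_right T3 h0eg]
    · nlinarith [T4]
  refine ⟨e1, e2, ?_⟩
  rw [e1, e2]
  field_simp
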